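/- Let k be a real number with e^{ikL_j} ≠ 0 for j=1,2,3 (e.g., k real and L_j > 0). The 6×6 coboundary matrix of the transmission line sheaf on the 3-star graph (center vertex of degree 3 with three leaf edges of lengths L_1, L_2, L_3) has rank exactly 5; equivalently, the space of global sections of the transmission line sheaf on the 3-star is 1-dimensional, regardless of the edge lengths. -/
import Mathlib


open Complex

/-- The coboundary matrix of the transmission line sheaf on the 3-star graph (center
vertex of degree 3, three leaf edges of lengths `L₁, L₂, L₃`), with wavenumber `k`.
Columns 1–3 correspond to the leaf stalks, columns 4–6 to the center stalk. -/
noncomputable def starCoboundary (k : ℝ) (L1 L2 L3 : ℝ) : Matrix (Fin 6) (Fin 6) ℂ :=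
  !![-exp (I * k * L1), 0, 0, 1, 0, 0;
     -1, 0, 0, -(1/3) * exp (-(I * k * L1)), (2/3) * exp (-(I * k * L1)), (2/3) * exp (-(I * k * L1));
     0, -exp (I * k * L2), 0, 0, 1, 0;
     0, -1, 0, (2/3) * exp (-(I * k * L2)), -(1/3) * exp (-(I * k * L2)), (2/3) * exp (-(I * k * L2));
     0, 0, -exp (I * k * L3), 0, 0, 1;
     0, 0, -1, (2/3) * exp (-(I * k * L3)), (2/3) * exp (-(I * k * L3)), -(1/3) * exp (-(I * k * L3))]

/-- Auxiliary: evaluating a length-6 vector at index 5. -/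
@[simp] lemma starCoboundary_cons_val_five {α : Type*} (x : α) (u : Fin 5 → α) :
    Matrix.vecCons x u 5 = u 4 := rfl

set_option maxHeartbeats 1000000 in
/-- for real `k` and positive edge lengths, the 6×6 coboundary matrix of the
transmission line sheaf on the 3-star has rank exactly 5; equivalently the space of global
sections of the transmission line sheaf on the 3-star is 1-dimensional, regardless of the
edge lengths. -/
theorem star_coboundary_rank_five (k : ℝ) (L1 L2 L3 : ℝ)
    (hL1 : 0 < L1) (hL2 : 0 < L2) (hL3 : 0 < L3) :
    (starCoboundary k L1 L2 L3).rank = 5 ∧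
      Module.finrank ℂ (LinearMap.ker (starCoboundary k L1 L2 L3).mulVecLin) = 1 := by
  have hee1 : exp (-(I * k * L1)) * exp (I * k * L1) = 1 := by rw [← exp_add]; simp
  have hee2 : exp (-(I * k * L2)) * exp (I * k * L2) = 1 := by rw [← exp_add]; simp
  have hee3 : exp (-(I * k * L3)) * exp (I * k * L3) = 1 := by rw [← exp_add]; simp
  set v : Fin 6 → ℂ := ![exp (-(I * k * L1)), exp (-(I * k * L2)), exp (-(I * k * L3)), 1, 1, 1]
    with hv
  have hvne : v ≠ 0 := by
    intro h
    have := congrFun h 3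
    simp [hv] at this
  have hker : LinearMap.ker (starCoboundary k L1 L2 L3).mulVecLin = Submodule.span ℂ {v} := by
    apply le_antisymm
    · intro x hx
      rw [LinearMap.mem_ker, Matrix.mulVecLin_apply] at hx
      have h0 := congrFun hx 0
      have h1 := congrFun hx 1
      have h2 := congrFun hx 2
      have h3 := congrFun hx 3
      have h4 := congrFun hx 4
      have h5 := congrFun hx 5
      simp [starCoboundary, Matrix.mulVec, dotProduct, Fin.sum_univ_six]
        at h0 h1 h2 h3 h4 h5
      have g1 : 2 * x 3 - x 4 - x 5 = 0 := by
        linear_combination (3/2) * h0 - (3/2) * exp (I * k * L1) * h1 +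
          (x 4 + x 5 - x 3 / 2) * hee1
      have g2 : 2 * x 4 - x 3 - x 5 = 0 := by
        linear_combination (3/2) * h2 - (3/2) * exp (I * k * L2) * h3 +
          (x 3 + x 5 - x 4 / 2) * hee2
      have g3 : 2 * x 5 - x 3 - x 4 = 0 := by
        linear_combination (3/2) * h4 - (3/2) * exp (I * k * L3) * h5 +
          (x 3 + x 4 - x 5 / 2) * hee3
      have e4 : x 4 = x 3 := by linear_combination (1/3) * g2 - (1/3) * g1
      have e5 : x 5 = x 3 := by linear_combination (1/3) * g3 - (1/3) * g1
      rw [Submodule.mem_span_singleton]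
      refine ⟨x 3, ?_⟩
      funext i
      fin_cases i
      · show x 3 * exp (-(I * k * L1)) = x 0
        linear_combination exp (-(I * k * L1)) * h0 + x 0 * hee1
      · show x 3 * exp (-(I * k * L2)) = x 1
        linear_combination exp (-(I * k * L2)) * h2 + x 1 * hee2 -
          exp (-(I * k * L2)) * e4
      · show x 3 * exp (-(I * k * L3)) = x 2
        linear_combination exp (-(I * k * L3)) * h4 + x 2 * hee3 -
          exp (-(I * k * L3)) * e5
      · show x 3 * 1 = x 3
        ring
      · show x 3 * 1 = x 4
        rw [e4]; ring
      · show x 3 * 1 = x 5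
        rw [e5]; ring
    · rw [Submodule.span_singleton_le_iff_mem, LinearMap.mem_ker, Matrix.mulVecLin_apply]
      funext i
      fin_cases i <;>
        simp [hv, starCoboundary, Matrix.mulVec, dotProduct, Fin.sum_univ_six] <;>
        ring_nf <;>
        simp [← Complex.exp_add]
  have hdim : Module.finrank ℂ (LinearMap.ker (starCoboundary k L1 L2 L3).mulVecLin) = 1 := by
    rw [hker]
    exact finrank_span_singleton hvne
  refine ⟨?_, hdim⟩
  have hrn := (starCoboundary k L1 L2 L3).mulVecLin.finrank_range_add_finrank_ker
  rw [hdim] at hrn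
  simp only [Module.finrank_pi, Fintype.card_fin] at hrn
  rw [Matrix.rank]
  omega
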